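/- Let (f_ω)_{ω∈Ω} be a uniformly good family of maps on X, and let c>0 be the constant from hypothesis (H4) corresponding to a value a>0 such that h_ω ∈ C_a for a.e. ω (such a exists since esssup_ω ‖h_ω‖_BV < ∞). Then essinf h_ω ≥ c/2 for ℙ-a.e. ω ∈ Ω. -/

import Mathlib

open MeasureTheory Filter ENNReal

noncomputable section

namespace RandomASIP

variable {Ω X : Type*} [MeasurableSpace Ω] [MeasurableSpace X]

/-- The iterated maps `f_ω^n = f_{σ^{n-1}ω} ∘ ⋯ ∘ f_ω`. -/
def fIter (σ : Ω → Ω) (f : Ω → X → X) (ω : Ω) : ℕ → X → X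
  | 0 => id
  | n + 1 => f (σ^[n] ω) ∘ fIter σ f ω n

/-- The iterated transfer operators `𝓛_ω^{(n)} = 𝓛_{σ^{n-1}ω} ∘ ⋯ ∘ 𝓛_ω`. -/
def Lit (σ : Ω → Ω) (L : Ω → (X → ℝ) → X → ℝ) (ω : Ω) : ℕ → (X → ℝ) → X → ℝ
  | 0 => fun φ => φ
  | n + 1 => fun φ => L (σ^[n] ω) (Lit σ L ω n φ)

/-- The BV norm `‖φ‖_BV = var(φ) + ‖φ‖₁`. -/
def bvNorm (m : Measure X) (var : (X → ℝ) → ℝ≥0∞) (φ : X → ℝ) : ℝ≥0∞ :=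
  var φ + eLpNorm φ 1 m

/-- The norm `‖φ‖_var = var(φ) + ‖φ‖_∞`. -/
def varNorm (m : Measure X) (var : (X → ℝ) → ℝ≥0∞) (φ : X → ℝ) : ℝ≥0∞ :=
  var φ + eLpNorm φ ∞ m

/-- Membership in `BV = {φ ∈ L¹(m) : var(φ) < ∞}`. -/
def MemBV (m : Measure X) (var : (X → ℝ) → ℝ≥0∞) (φ : X → ℝ) : Prop :=
  Integrable φ m ∧ var φ < ∞

/-- The cone `C_a = {φ ∈ BV : φ ≥ 0 and var(φ) ≤ a ∫ φ dm}`. -/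
def coneC (m : Measure X) (var : (X → ℝ) → ℝ≥0∞) (a : ℝ) : Set (X → ℝ) :=
  {φ | MemBV m var φ ∧ 0 ≤ᵐ[m] φ ∧ var φ ≤ ENNReal.ofReal (a * ∫ x, φ x ∂m)}

/-- Conditions (V1)–(V8) on the abstract variation functional. -/
structure VariationGood (m : Measure X) (var : (X → ℝ) → ℝ≥0∞) : Prop where
  /-- (V1) -/
  v1 : ∀ (t : ℝ) (h : X → ℝ), var (fun x => t * h x) = ENNReal.ofReal |t| * var h
  /-- (V2) -/
  v2 : ∀ g h : X → ℝ, var (g + h) ≤ var g + var h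
  /-- (V3) -/
  v3 : ∃ Cvar : ℝ, 1 ≤ Cvar ∧ ∀ h : X → ℝ,
        eLpNorm h ∞ m ≤ ENNReal.ofReal Cvar * (eLpNorm h 1 m + var h)
  /-- (V4): `L¹(m)`-compactness of BV-balls, in sequential form -/
  v4 : ∀ C : ℝ≥0∞, ∀ g : ℕ → X → ℝ, (∀ n, eLpNorm (g n) 1 m + var (g n) ≤ C) →
        ∃ (ns : ℕ → ℕ) (φ : X → ℝ), StrictMono ns ∧
          Tendsto (fun k => eLpNorm (g (ns k) - φ) 1 m) atTop (nhds 0)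
  /-- (V5) -/
  v5 : var (fun _ => (1 : ℝ)) < ∞
  /-- (V6) -/
  v6 : ∀ h : X → ℝ, 0 ≤ᵐ[m] h → eLpNorm h 1 m = 1 → ∀ ε : ℝ≥0∞, 0 < ε →
        ∃ g : X → ℝ, 0 ≤ᵐ[m] g ∧ eLpNorm g 1 m = 1 ∧ var g < ∞ ∧ eLpNorm (h - g) 1 m < ε
  /-- (V7) -/
  v7 : ∃ Kvar : ℝ≥0∞, Kvar < ∞ ∧ ∀ g h : X → ℝ,
        var (g * h) + eLpNorm (g * h) 1 m ≤
          Kvar * (var h + eLpNorm h 1 m) * (var g + eLpNorm g 1 m)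
  /-- (V8) -/
  v8 : ∀ g : X → ℝ, 0 < essInf g m →
        var (fun x => 1 / g x) ≤ var g / ENNReal.ofReal (essInf g m) ^ 2

/-- The hypotheses on the random dynamical system: `σ` is an invertible ergodic
measure-preserving map, the `𝓛_ω` are the transfer operators of the `f_ω`, and
the uniformly good conditions (H1)–(H5) hold. -/
structure UniformlyGood (P : Measure Ω) (σ : Ω → Ω) (m : Measure X)
    (var : (X → ℝ) → ℝ≥0∞) (f : Ω → X → X) (L : Ω → (X → ℝ) → X → ℝ) : Prop where
  sigma_bij : Function.Bijective σ
  sigma_pres : MeasurePreserving σ P P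
  sigma_erg : Ergodic σ P
  f_meas : ∀ ω, Measurable (f ω)
  /-- `𝓛_ω` descends to `L¹(m)` -/
  L_congr : ∀ ω (φ₁ φ₂ : X → ℝ), φ₁ =ᵐ[m] φ₂ → L ω φ₁ =ᵐ[m] L ω φ₂
  L_int : ∀ ω (φ : X → ℝ), Integrable φ m → Integrable (L ω φ) m
  /-- the duality relation defining the transfer operator `𝓛_ω` -/
  duality : ∀ ω (φ ψ : X → ℝ), Integrable φ m → Measurable ψ → (∃ c : ℝ, ∀ x, |ψ x| ≤ c) →
      ∫ x, L ω φ x * ψ x ∂m = ∫ x, φ x * ψ (f ω x) ∂m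
  /-- (H1) -/
  h1 : ∀ H : Ω → X → ℝ, Measurable (Function.uncurry H) →
      Measurable fun p : Ω × X => L p.1 (H p.1) p.2
  /-- (H2) -/
  h2 : ∃ C : ℝ, 0 < C ∧ ∀ᵐ ω ∂P, ∀ φ : X → ℝ,
      bvNorm m var (L ω φ) ≤ ENNReal.ofReal C * bvNorm m var φ
  /-- (H3) -/
  h3 : ∀ᵐ ω ∂P, ∃ B : ℝ≥0∞, B < ∞ ∧ ∀ (n : ℕ) (φ : X → ℝ), bvNorm m var φ ≤ 1 →
      bvNorm m var (φ ∘ f (σ^[n] ω)) ≤ B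
  /-- (H4) -/
  h4 : ∃ N : ℕ, 0 < N ∧ ∀ a : ℝ, 0 < a → ∃ n₀ : ℕ, ∀ n, n₀ ≤ n → ∃ c : ℝ, 0 < c ∧
      ∀ᵐ ω ∂P, ∀ g ∈ coneC m var a,
        c / 2 * ∫ x, |g x| ∂m ≤ essInf (Lit σ L ω (N * n) g) m
  /-- (H5) -/
  h5 : ∃ K lam : ℝ, 0 < K ∧ 0 < lam ∧ ∀ᵐ ω ∂P, ∀ (n : ℕ) (φ : X → ℝ), MemBV m var φ →
      (∫ x, φ x ∂m) = 0 →
      bvNorm m var (Lit σ L ω n φ) ≤ ENNReal.ofReal (K * Real.exp (-lam * n)) * bvNorm m var φ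

/-- The properties of the unique random absolutely continuous invariant density `h`. -/
structure IsACIM (P : Measure Ω) (σ : Ω → Ω) (m : Measure X)
    (var : (X → ℝ) → ℝ≥0∞) (L : Ω → (X → ℝ) → X → ℝ) (h : Ω → X → ℝ) : Prop where
  meas : Measurable (Function.uncurry h)
  nonneg : ∀ ω x, 0 ≤ h ω x
  mem_bv : ∀ᵐ ω ∂P, MemBV m var (h ω)
  mass : ∀ᵐ ω ∂P, (∫ x, h ω x ∂m) = 1
  equiv : ∀ᵐ ω ∂P, L ω (h ω) =ᵐ[m] h (σ ω)
  bdd : ∃ B : ℝ≥0∞, B < ∞ ∧ ∀ᵐ ω ∂P, bvNorm m var (h ω) ≤ B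

/-- The fibered measure `μ_ω` with `dμ_ω = h_ω dm`. -/
def muOmega (m : Measure X) (h : Ω → X → ℝ) (ω : Ω) : Measure X :=
  m.withDensity fun x => ENNReal.ofReal (h ω x)

/-- The skew product `τ(ω,x) = (σ ω, f_ω x)`. -/
def tau (σ : Ω → Ω) (f : Ω → X → X) : Ω × X → Ω × X :=
  fun p => (σ p.1, f p.1 p.2)

/-- The invariant measure `μ` of the skew product, `dμ = h d(ℙ × m)`. -/
def muProd (P : Measure Ω) (m : Measure X) (h : Ω → X → ℝ) : Measure (Ω × X) :=
  (P.prod m).withDensity fun p => ENNReal.ofReal (h p.1 p.2)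

/-- The centered observable `ψ̃_ω = ψ_ω − ∫ ψ_ω dμ_ω`. -/
def centered (m : Measure X) (h : Ω → X → ℝ) (ψ : Ω → X → ℝ) (ω : Ω) : X → ℝ :=
  fun x => ψ ω x - ∫ y, ψ ω y ∂(muOmega m h ω)

/-- The functions `G_k` of the martingale decomposition: `G₀ = 0` and
`G_{k+1} = 𝓛_{σ^k ω}(ψ̃_{σ^k ω} h_{σ^k ω} + G_k h_{σ^k ω}) / h_{σ^{k+1} ω}`. -/
def Gseq (σ : Ω → Ω) (L : Ω → (X → ℝ) → X → ℝ) (h ψt : Ω → X → ℝ) (ω : Ω) : ℕ → X → ℝ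
  | 0 => 0
  | k + 1 => fun x =>
      L (σ^[k] ω) (fun y => ψt (σ^[k] ω) y * h (σ^[k] ω) y + Gseq σ L h ψt ω k y * h (σ^[k] ω) y) x /
        h (σ^[k + 1] ω) x

/-- `M_n = ψ̃_{σ^n ω} + G_n − G_{n+1} ∘ f_{σ^n ω}`. -/
def Mseq (σ : Ω → Ω) (f : Ω → X → X) (L : Ω → (X → ℝ) → X → ℝ)
    (h ψt : Ω → X → ℝ) (ω : Ω) (n : ℕ) : X → ℝ :=
  fun x => ψt (σ^[n] ω) x + Gseq σ L h ψt ω n x - Gseq σ L h ψt ω (n + 1) (f (σ^[n] ω) x)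

/-- The σ-algebra `𝓣_ω^n = (f_ω^n)⁻¹(𝓑)`. -/
def Talg (σ : Ω → Ω) (f : Ω → X → X) (ω : Ω) (n : ℕ) : MeasurableSpace X :=
  MeasurableSpace.comap (fIter σ f ω n) inferInstance

end RandomASIP

namespace RandomASIP


/-- Auxiliary: the iterated transfer operator applied to the invariant density
agrees a.e. with the density at the shifted fiber. -/
theorem lit_acim_ae_eq {Ω X : Type*} [MeasurableSpace Ω] [MeasurableSpace X]
    (P : Measure Ω) (σ : Ω → Ω) (m : Measure X)
    (L : Ω → (X → ℝ) → X → ℝ) (h : Ω → X → ℝ)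
    (hpres : MeasurePreserving σ P P)
    (hLcongr : ∀ ω (φ₁ φ₂ : X → ℝ), φ₁ =ᵐ[m] φ₂ → L ω φ₁ =ᵐ[m] L ω φ₂)
    (hequiv : ∀ᵐ ω ∂P, L ω (h ω) =ᵐ[m] h (σ ω)) (j : ℕ) :
    ∀ᵐ ω ∂P, Lit σ L ω j (h ω) =ᵐ[m] h (σ^[j] ω) := by
  induction j with
  | zero =>
    refine Filter.Eventually.of_forall fun ω => ?_
    simp only [Lit, Function.iterate_zero_apply]
    exact Filter.EventuallyEq.rfl
  | succ j ih =>
    have hq := (hpres.iterate j).quasiMeasurePreserving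
    filter_upwards [ih, hq.ae hequiv] with ω h1 h2
    have hdef : Lit σ L ω (j + 1) (h ω) = L (σ^[j] ω) (Lit σ L ω j (h ω)) := rfl
    rw [hdef, Function.iterate_succ_apply']
    exact (hLcongr _ _ _ h1).trans h2

/-- Lemma: uniform lower bound on the invariant density: if `a > 0` is
such that `h_ω ∈ C_a` for a.e. `ω`, and `c > 0` is the constant from hypothesis (H4)
corresponding to `a` (for some `N, n`), then `essinf h_ω ≥ c/2` for ℙ-a.e. `ω`. -/
theorem density_lower_bound {Ω X : Type*} [MeasurableSpace Ω] [MeasurableSpace X]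
    (P : Measure Ω) [IsProbabilityMeasure P] (σ : Ω → Ω)
    (m : Measure X) [IsProbabilityMeasure m] (var : (X → ℝ) → ℝ≥0∞)
    (f : Ω → X → X) (L : Ω → (X → ℝ) → X → ℝ)
    (hvar : VariationGood m var) (hgood : UniformlyGood P σ m var f L)
    (h : Ω → X → ℝ) (hacim : IsACIM P σ m var L h)
    (a : ℝ) (ha : 0 < a) (hcone : ∀ᵐ ω ∂P, h ω ∈ coneC m var a)
    (N n : ℕ) (hN : 0 < N) (c : ℝ) (hc : 0 < c)
    (hH4 : ∀ᵐ ω ∂P, ∀ g ∈ coneC m var a,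
      c / 2 * ∫ x, |g x| ∂m ≤ essInf (Lit σ L ω (N * n) g) m) :
    ∀ᵐ ω ∂P, c / 2 ≤ essInf (h ω) m := by
  classical
  haveI : (ae m).NeBot := ae_neBot.mpr (IsProbabilityMeasure.ne_zero m)
  set k := N * n with hk
  -- Step A: the iterated operator maps h_ω to h_{σ^k ω} a.e.
  have hlit : ∀ᵐ ω ∂P, Lit σ L ω k (h ω) =ᵐ[m] h (σ^[k] ω) :=
    lit_acim_ae_eq P σ m L h hgood.sigma_pres hgood.L_congr hacim.equiv k
  -- a.e. upper boundedness of h ω, from BV membership and (V3)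
  obtain ⟨Cv, hCv1, hCv⟩ := hvar.v3
  have hbdd : ∀ᵐ ω ∂P, ∃ b : ℝ, ∀ᵐ x ∂m, h ω x ≤ b := by
    filter_upwards [hacim.mem_bv] with ω hω
    have h1 : eLpNorm (h ω) 1 m < ∞ := (memLp_one_iff_integrable.mpr hω.1).2
    have hinf : eLpNorm (h ω) ∞ m < ∞ :=
      lt_of_le_of_lt (hCv (h ω))
        (ENNReal.mul_lt_top ENNReal.ofReal_lt_top (ENNReal.add_lt_top.mpr ⟨h1, hω.2⟩))
    rw [eLpNorm_exponent_top] at hinf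
    refine ⟨(eLpNormEssSup (h ω) m).toReal, ?_⟩
    filter_upwards [ae_le_eLpNormEssSup (f := h ω) (μ := m)] with x hx
    calc h ω x ≤ |h ω x| := le_abs_self _
      _ = ((‖h ω x‖₊ : ℝ≥0∞)).toReal := by
          simp [Real.norm_eq_abs, ENNReal.coe_toReal]
      _ ≤ (eLpNormEssSup (h ω) m).toReal := ENNReal.toReal_mono hinf.ne hx
  -- Step B+C: a.e. ω, c/2 ≤ h (σ^[k] ω) x for a.e. x
  have hshift : ∀ᵐ ω ∂P, ∀ᵐ x ∂m, c / 2 ≤ h (σ^[k] ω) x := by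
    filter_upwards [hlit, hH4, hcone, hacim.mass] with ω hl hh4 hco hmass
    have habs : (∫ x, |h ω x| ∂m) = 1 := by
      rw [← hmass]
      exact integral_congr_ae (Filter.Eventually.of_forall fun x =>
        abs_of_nonneg (hacim.nonneg ω x))
    have hess : c / 2 ≤ essInf (h (σ^[k] ω)) m := by
      have := hh4 (h ω) hco
      rw [habs, mul_one] at this
      rwa [essInf_congr_ae hl] at this
    have hjstep : ∀ j : ℕ, ∀ᵐ x ∂m, c / 2 - 1 / (j + 1) < h (σ^[k] ω) x := by
      intro j
      have hlt : c / 2 - 1 / (j + 1 : ℝ) < essInf (h (σ^[k] ω)) m := by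
        have hp : (0 : ℝ) < 1 / (j + 1 : ℝ) := by positivity
        linarith
      exact Filter.eventually_lt_of_lt_liminf hlt
        ⟨0, Filter.eventually_map.mpr (Filter.Eventually.of_forall fun x => hacim.nonneg _ x)⟩
    have hall : ∀ᵐ x ∂m, ∀ j : ℕ, c / 2 - 1 / (j + 1) < h (σ^[k] ω) x :=
      ae_all_iff.mpr hjstep
    filter_upwards [hall] with x hx
    have htend : Filter.Tendsto (fun j : ℕ => c / 2 - 1 / (j + 1 : ℝ)) atTop
        (nhds (c / 2)) := by
      have := tendsto_one_div_add_atTop_nhds_zero_nat (𝕜 := ℝ)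
      simpa using Filter.Tendsto.sub (tendsto_const_nhds (x := c / 2)) this
    exact le_of_tendsto' htend fun j => (hx j).le
  -- Step D: the set A = {ω | m {x | h ω x < c/2} = 0} is measurable
  have hSmeas : MeasurableSet {p : Ω × X | h p.1 p.2 < c / 2} := by
    have hm : Measurable fun p : Ω × X => h p.1 p.2 := hacim.meas
    exact measurableSet_lt hm measurable_const
  have hgmeas : Measurable fun ω => m {x | h ω x < c / 2} :=
    measurable_measure_prodMk_left hSmeas
  set A : Set Ω := {ω | m {x | h ω x < c / 2} = 0} with hA
  have hAmeas : MeasurableSet A := hgmeas (measurableSet_singleton 0)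
  -- Step E: P(σ^[k] ⁻¹' A) = 1, hence P(A) = 1
  have hTA : ∀ᵐ ω ∂P, σ^[k] ω ∈ A := by
    filter_upwards [hshift] with ω hω
    show m {x | h (σ^[k] ω) x < c / 2} = 0
    have : {x | h (σ^[k] ω) x < c / 2} ⊆ {x | ¬ c / 2 ≤ h (σ^[k] ω) x} := by
      intro x hx; exact not_le.mpr hx
    exact measure_mono_null this (ae_iff.mp hω)
  have hpreim : P (σ^[k] ⁻¹' A) = 1 := by
    rw [← measure_univ (μ := P)]
    exact measure_congr (Filter.eventuallyEq_univ.mpr hTA)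
  have hPA : P A = 1 := by
    rw [← (hgood.sigma_pres.iterate k).measure_preimage hAmeas.nullMeasurableSet]
    exact hpreim
  have hmemA : ∀ᵐ ω ∂P, ω ∈ A := by
    rw [ae_iff]
    have : {ω | ¬ ω ∈ A} = Aᶜ := rfl
    rw [this, measure_compl hAmeas (measure_ne_top P A), hPA, measure_univ]
    simp
  -- Step F: conclude
  filter_upwards [hmemA, hbdd] with ω hωA hωb
  obtain ⟨b, hb⟩ := hωb
  have hae : ∀ᵐ x ∂m, c / 2 ≤ h ω x := by
    rw [ae_iff]
    have : {x | ¬ c / 2 ≤ h ω x} = {x | h ω x < c / 2} := by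
      ext x; simp [not_le]
    rw [this]
    exact hωA
  exact Filter.le_liminf_of_le (Filter.isCoboundedUnder_ge_of_eventually_le (ae m) hb) hae

end RandomASIP
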